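/- arXiv:math/0302307 — 3 statements merged into one kernel-verified Lean document; each statement's English description precedes it below -/
import Mathlib

section
/- Let S ⊆ V be a nonempty stable set with characteristic vector x ∈ {0,1}^V, and let X = (1/(x^T x)) · x x^T. Then X is symmetric positive semidefinite, tr(X) = 1, and X_{ij} = 0 for every edge (i,j) ∈ E; that is, X is feasible for relaxation (7). Moreover, when all weights equal 1 (so that the cost matrix W is the all-ones matrix), tr(WX) = |S|. -/
open Matrix

/-- Let `S` be a nonempty stable set with characteristic vector `x`, and let
`X = (1/(xᵀx)) · x xᵀ`.  Then `X` is symmetric positive semidefinite,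
`tr X = 1`, and `X i j = 0` on every edge, i.e. `X` is feasible for
relaxation (7); moreover with all weights `1` (cost matrix the all-ones
matrix `J`), `tr(J X) = |S|`. -/
theorem stmt_8 {V : Type*} [Fintype V] [DecidableEq V] (G : SimpleGraph V)
    (S : Finset V) (hne : S.Nonempty) (hS : ∀ i ∈ S, ∀ j ∈ S, ¬ G.Adj i j)
    (x : V → ℝ) (hx : ∀ i, x i = if i ∈ S then 1 else 0)
    (X : Matrix V V ℝ) (hX : X = (1 / (x ⬝ᵥ x)) • Matrix.vecMulVec x x)
    (J : Matrix V V ℝ) (hJ : ∀ i j, J i j = 1) :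
    X.PosSemidef ∧ Matrix.trace X = 1 ∧
      (∀ i j, G.Adj i j → X i j = 0) ∧
      Matrix.trace (J * X) = (S.card : ℝ) := by
  have hsum : ∑ i, x i = (S.card : ℝ) := by
    rw [Finset.sum_congr rfl (fun i _ => hx i), Finset.sum_ite_mem,
      Finset.univ_inter, Finset.sum_const, nsmul_eq_mul, mul_one]
  have hxx : x ⬝ᵥ x = (S.card : ℝ) := by
    rw [dotProduct]
    rw [← hsum]
    refine Finset.sum_congr rfl fun i _ => ?_
    rw [hx i]; by_cases h : i ∈ S <;> simp [h]
  have hcard : (0 : ℝ) < S.card := by exact_mod_cast Finset.card_pos.mpr hne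
  have hc : (0 : ℝ) ≤ 1 / (x ⬝ᵥ x) := by rw [hxx]; positivity
  refine ⟨posSemidef_iff_dotProduct_mulVec.mpr ⟨?_, ?_⟩, ?_, ?_, ?_⟩
  · rw [hX]
    ext i j
    simp [vecMulVec_apply, conjTranspose_apply, mul_comm]
  · intro y
    rw [hX]
    have : star y ⬝ᵥ ((1 / (x ⬝ᵥ x)) • vecMulVec x x) *ᵥ y
        = (1 / (x ⬝ᵥ x)) * ((x ⬝ᵥ y) * (x ⬝ᵥ y)) := by
      simp only [dotProduct, mulVec, vecMulVec_apply, Matrix.smul_apply, smul_eq_mul,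
        Finset.mul_sum, Finset.sum_mul, star_trivial]
      rw [Finset.sum_comm]
      refine Finset.sum_congr rfl fun i _ => Finset.sum_congr rfl fun j _ => ?_
      ring
    rw [this]
    have := mul_self_nonneg (x ⬝ᵥ y)
    positivity
  · rw [hX]
    simp only [trace_smul, smul_eq_mul]
    have : (vecMulVec x x).trace = x ⬝ᵥ x := by
      simp [trace, diag, vecMulVec_apply, dotProduct]
    rw [this, hxx]
    field_simp
  · intro i j hij
    rw [hX]
    simp only [Matrix.smul_apply, vecMulVec_apply, smul_eq_mul]
    have : x i * x j = 0 := by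
      rw [hx i, hx j]
      by_cases hi : i ∈ S
      · by_cases hj : j ∈ S
        · exact absurd hij (hS i hi j hj)
        · simp [hj]
      · simp [hi]
    rw [this, mul_zero]
  · rw [hX]
    have : Matrix.trace (J * ((1 / (x ⬝ᵥ x)) • vecMulVec x x))
        = (1 / (x ⬝ᵥ x)) * ((∑ i, x i) * (∑ i, x i)) := by
      simp only [trace, diag, mul_apply, Matrix.smul_apply, vecMulVec_apply, smul_eq_mul,
        Finset.mul_sum, Finset.sum_mul]
      rw [Finset.sum_comm]
      refine Finset.sum_congr rfl fun i _ => Finset.sum_congr rfl fun j _ => ?_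
      rw [hJ j i]; ring
    rw [this, hxx, hsum]
    field_simp
end

section
/- Suppose w_i > 0 for every i ∈ V, let S ⊆ V be a nonempty stable set, and define the vector x ∈ ℝ^V by x_i = √(w_i) for i ∈ S and x_i = 0 otherwise. Then X = (1/(x^T x)) · x x^T is feasible for relaxation (7) and tr(WX) = w(S) = Σ_{i∈S} w_i. -/
open Matrix

/-- Suppose `w i > 0` for every vertex, let `S` be a nonempty stable set, and
put `x i = √(w i)` for `i ∈ S` and `x i = 0` otherwise.  Then
`X = (1/(xᵀx)) · x xᵀ` is feasible for relaxation (7) — positive semidefinite,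
`tr X = 1`, `X i j = 0` on edges — and with the cost matrix
`W i i = w i`, `W i j = √(w i * w j)` for `i ≠ j`, one has
`tr(W X) = w(S) = ∑ i ∈ S, w i`. -/
theorem stmt_9 {V : Type*} [Fintype V] [DecidableEq V] (G : SimpleGraph V)
    (w : V → ℝ) (hw : ∀ i, 0 < w i)
    (S : Finset V) (hne : S.Nonempty) (hS : ∀ i ∈ S, ∀ j ∈ S, ¬ G.Adj i j)
    (x : V → ℝ) (hx : ∀ i, x i = if i ∈ S then Real.sqrt (w i) else 0)
    (X : Matrix V V ℝ) (hX : X = (1 / (x ⬝ᵥ x)) • Matrix.vecMulVec x x)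
    (W : Matrix V V ℝ)
    (hW : ∀ i j, W i j = if i = j then w i else Real.sqrt (w i * w j)) :
    (X.PosSemidef ∧ Matrix.trace X = 1 ∧ ∀ i j, G.Adj i j → X i j = 0) ∧
      Matrix.trace (W * X) = ∑ i ∈ S, w i := by
  have hxx : ∀ i, x i * x i = if i ∈ S then w i else 0 := by
    intro i
    rw [hx]
    split
    · exact Real.mul_self_sqrt (hw i).le
    · ring
  have hc : x ⬝ᵥ x = ∑ i ∈ S, w i := by
    simp only [dotProduct]
    rw [Finset.sum_congr rfl fun i _ => hxx i, Finset.sum_ite_mem, Finset.univ_inter]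
  have hcpos : 0 < x ⬝ᵥ x := by
    rw [hc]
    exact Finset.sum_pos (fun i _ => hw i) hne
  have hxS : ∀ i, i ∉ S → x i = 0 := fun i hi => by rw [hx, if_neg hi]
  refine ⟨⟨posSemidef_iff_dotProduct_mulVec.mpr ⟨?_, ?_⟩, ?_, ?_⟩, ?_⟩
  · ext i j
    rw [hX]
    simp [vecMulVec_apply, mul_comm]
  · intro v
    have key : star v ⬝ᵥ X *ᵥ v = (1 / (x ⬝ᵥ x)) * ((x ⬝ᵥ v) * (x ⬝ᵥ v)) := by
      rw [hX]
      calc star v ⬝ᵥ ((1 / (x ⬝ᵥ x)) • Matrix.vecMulVec x x) *ᵥ v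
          = ∑ i, ∑ j, (1 / (x ⬝ᵥ x)) * ((x i * v i) * (x j * v j)) := by
            simp only [star_trivial, dotProduct, mulVec, Matrix.smul_apply, vecMulVec_apply,
              smul_eq_mul, Finset.mul_sum]
            exact Finset.sum_congr rfl fun i _ => Finset.sum_congr rfl fun j _ => by ring
        _ = (1 / (x ⬝ᵥ x)) * ((x ⬝ᵥ v) * (x ⬝ᵥ v)) := by
            rw [show (x ⬝ᵥ v) * (x ⬝ᵥ v) = ∑ i, ∑ j, (x i * v i) * (x j * v j) from by
              rw [dotProduct, Finset.sum_mul_sum]]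
            simp only [Finset.mul_sum]
    rw [key]
    exact mul_nonneg (by positivity) (mul_self_nonneg _)
  · rw [hX, trace_smul]
    have : (Matrix.vecMulVec x x).trace = x ⬝ᵥ x := by
      simp [Matrix.trace, Matrix.diag, vecMulVec_apply, dotProduct]
    rw [this, smul_eq_mul, one_div, inv_mul_cancel₀ hcpos.ne']
  · intro i j hadj
    rw [hX]
    simp only [Matrix.smul_apply, vecMulVec_apply, smul_eq_mul]
    by_cases hi : i ∈ S
    · by_cases hj : j ∈ S
      · exact absurd hadj (hS i hi j hj)
      · rw [hxS j hj]; ring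
    · rw [hxS i hi]; ring
  · have hWterm : ∀ i j, W i j * (x j * x i)
        = (if i ∈ S then w i else 0) * (if j ∈ S then w j else 0) := by
      intro i j
      rcases eq_or_ne i j with rfl | hij
      · rw [hW, if_pos rfl, hxx]
        by_cases hi : i ∈ S <;> simp [hi]
      · rw [hW, if_neg hij, hx, hx]
        by_cases hi : i ∈ S
        · by_cases hj : j ∈ S
          · simp only [hi, hj, if_true]
            rw [Real.sqrt_mul (hw i).le]
            linear_combination (Real.sqrt (w j) * Real.sqrt (w j)) * Real.mul_self_sqrt (hw i).le +
              w i * Real.mul_self_sqrt (hw j).le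
          · simp [hj]
        · simp [hi]
    rw [hX, Matrix.mul_smul, trace_smul, smul_eq_mul]
    have htr : (W * Matrix.vecMulVec x x).trace = (x ⬝ᵥ x) * (x ⬝ᵥ x) := by
      simp only [Matrix.trace, Matrix.diag, Matrix.mul_apply, vecMulVec_apply]
      calc ∑ i, ∑ j, W i j * (x j * x i)
          = ∑ i, ∑ j, (if i ∈ S then w i else 0) * (if j ∈ S then w j else 0) :=
            Finset.sum_congr rfl fun i _ => Finset.sum_congr rfl fun j _ => hWterm i j
        _ = (∑ i, (if i ∈ S then w i else 0)) * (∑ j, (if j ∈ S then w j else 0)) := by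
            rw [Finset.sum_mul_sum]
        _ = (x ⬝ᵥ x) * (x ⬝ᵥ x) := by
            rw [hc, Finset.sum_ite_mem, Finset.univ_inter]
    rw [htr, one_div, ← mul_assoc, inv_mul_cancel₀ hcpos.ne', one_mul, hc]
end

section
/- Suppose w_i > 0 for every i ∈ V and V is nonempty. Then α(G,w) ≤ sup{tr(WX) : X feasible for relaxation (7)}; that is, the optimal value of relaxation (7) is an upper bound on the maximum weight of a stable set. -/
open Matrix

private lemma entry_bd {V : Type*} [Fintype V] [DecidableEq V] {X : Matrix V V ℝ}
    (hX : X.PosSemidef) (ht : Matrix.trace X = 1) (i j : V) : |X i j| ≤ 1 := by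
  have hq : ∀ y : V → ℝ, 0 ≤ y ⬝ᵥ X *ᵥ y := fun y => by
    simpa using hX.dotProduct_mulVec_nonneg y
  have hsym : ∀ a b, X a b = X b a := fun a b => by
    have := hX.1
    rw [Matrix.IsHermitian] at this
    conv_lhs => rw [← this]
    simp [Matrix.conjTranspose_apply]
  have hdiag : ∀ k, 0 ≤ X k k := fun k => by
    have := hq (Pi.single k 1)
    simpa [single_dotProduct, Matrix.mulVec_single_one] using this
  have hdle : ∀ k, X k k ≤ 1 := fun k => by
    rw [← ht, Matrix.trace]
    exact Finset.single_le_sum (fun l _ => hdiag l) (Finset.mem_univ k)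
  have key : ∀ c : ℝ, 0 ≤ X i i + c * (2 * X i j) + c^2 * X j j := fun c => by
    have := hq (Pi.single i 1 + c • (Pi.single j 1 : V → ℝ))
    simp only [dotProduct_add, add_dotProduct, mulVec_add, mulVec_smul,
      dotProduct_smul, smul_dotProduct, single_dotProduct,
      dotProduct_single, Matrix.mulVec_single_one, Matrix.col_apply, smul_eq_mul] at this
    rw [hsym j i] at this
    ring_nf at this ⊢
    linarith
  rw [abs_le]
  constructor
  · have := key 1
    nlinarith [hdle i, hdle j]
  · have := key (-1)
    nlinarith [hdle i, hdle j]

/-- `X` is feasible for relaxation (7). -/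
def Feasible7 {V : Type*} [Fintype V] (G : SimpleGraph V)
    (X : Matrix V V ℝ) : Prop :=
  X.PosSemidef ∧ Matrix.trace X = 1 ∧ ∀ i j, G.Adj i j → X i j = 0

/-- Suppose all weights are positive and `V` is nonempty.  Then
`α(G,w) ≤ sup { tr(W X) : X feasible for (7) }`, where the cost matrix is
`W i i = w i`, `W i j = √(w i * w j)` for `i ≠ j`: the optimal value of
relaxation (7) is an upper bound on the maximum weight of a stable set. -/
theorem stmt_15 {V : Type*} [Fintype V] [Nonempty V] [DecidableEq V]
    (G : SimpleGraph V) (w : V → ℝ) (hw : ∀ i, 0 < w i)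
    (W : Matrix V V ℝ)
    (hW : ∀ i j, W i j = if i = j then w i else Real.sqrt (w i * w j)) :
    sSup {v : ℝ | ∃ S : Finset V,
        (∀ i ∈ S, ∀ j ∈ S, ¬ G.Adj i j) ∧ v = ∑ i ∈ S, w i} ≤
      sSup {v : ℝ | ∃ X : Matrix V V ℝ,
        Feasible7 G X ∧ v = Matrix.trace (W * X)} := by
  set R : Set ℝ := {v : ℝ | ∃ X : Matrix V V ℝ,
      Feasible7 G X ∧ v = Matrix.trace (W * X)} with hR
  -- R is bounded above
  have hBdd : BddAbove R := by
    refine ⟨∑ i, ∑ j, |W i j|, ?_⟩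
    rintro v ⟨X, ⟨hpsd, htr, _⟩, rfl⟩
    have hb : ∀ i j : V, |X i j| ≤ 1 := fun i j => entry_bd hpsd htr i j
    calc Matrix.trace (W * X) = ∑ i, ∑ j, W i j * X j i := by
          simp [Matrix.trace, Matrix.mul_apply, Matrix.diag]
    _ ≤ ∑ i, ∑ j, |W i j| := by
        refine Finset.sum_le_sum fun i _ => Finset.sum_le_sum fun j _ => ?_
        calc W i j * X j i ≤ |W i j * X j i| := le_abs_self _
        _ = |W i j| * |X j i| := abs_mul _ _
        _ ≤ |W i j| * 1 := mul_le_mul_of_nonneg_left (hb j i) (abs_nonneg _)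
        _ = |W i j| := mul_one _
  -- rank-one construction
  have hmem : ∀ S : Finset V, S.Nonempty → (∀ i ∈ S, ∀ j ∈ S, ¬ G.Adj i j) →
      (∑ i ∈ S, w i) ∈ R := by
    intro S hSne hS
    set s : ℝ := ∑ i ∈ S, w i with hs
    have hspos : 0 < s := Finset.sum_pos (fun i _ => hw i) hSne
    set x : V → ℝ := fun i => if i ∈ S then Real.sqrt (w i) else 0 with hx
    set X : Matrix V V ℝ := Matrix.of fun i j => x i * x j / s with hXdef
    have hx2 : ∀ i, x i * x i = if i ∈ S then w i else 0 := by
      intro i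
      by_cases hi : i ∈ S <;> simp [hx, hi, Real.mul_self_sqrt (hw i).le]
    have hsum_ite : ∑ i, (if i ∈ S then w i else 0) = s := by
      rw [hs, Finset.sum_ite_mem, Finset.univ_inter]
    refine ⟨X, ⟨Matrix.PosSemidef.of_dotProduct_mulVec_nonneg ?_ ?_, ?_, ?_⟩, ?_⟩
    · -- Hermitian
      ext i j
      simp [hXdef, Matrix.conjTranspose_apply]
      ring
    · -- quadratic form nonneg
      intro y
      have step1 : (y : V → ℝ) ⬝ᵥ X *ᵥ y
          = ∑ i, ∑ j, (x i * y i) * (x j * y j) / s := by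
        simp only [dotProduct, mulVec, hXdef, Matrix.of_apply, Finset.mul_sum]
        exact Finset.sum_congr rfl fun i _ => Finset.sum_congr rfl fun j _ => by ring
      have step2 : (∑ i, ∑ j, (x i * y i) * (x j * y j) / s)
          = (∑ i, x i * y i)^2 / s := by
        rw [sq, Finset.sum_mul_sum, Finset.sum_div]
        exact Finset.sum_congr rfl fun i _ => by rw [Finset.sum_div]
      have : (y : V → ℝ) ⬝ᵥ X *ᵥ y = (∑ i, x i * y i)^2 / s := step1.trans step2
      simp only [star_trivial]
      rw [this]
      positivity
    · -- trace 1
      simp only [Matrix.trace, Matrix.diag, hXdef, Matrix.of_apply]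
      simp only [hx2]
      rw [← Finset.sum_div, hsum_ite, div_self hspos.ne']
    · -- edges
      intro i j hij
      have : i ∉ S ∨ j ∉ S := by
        by_contra h
        push_neg at h
        exact hS i h.1 j h.2 hij
      rcases this with hi | hj
      · simp [hXdef, hx, hi]
      · simp [hXdef, hx, hj]
    · -- trace value
      have key : ∀ i j : V, W i j * (x j * x i / s)
          = (if i ∈ S then w i else 0) * (if j ∈ S then w j else 0) / s := by
        intro i j
        by_cases hi : i ∈ S
        · by_cases hj : j ∈ S
          · rw [hW]
            simp only [hx, hi, hj, if_true]
            by_cases hij : i = j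
            · subst hij
              simp only [if_true]
              rw [Real.mul_self_sqrt (hw i).le]
              ring
            · rw [if_neg hij]
              have h1 : Real.sqrt (w j) * Real.sqrt (w i) = Real.sqrt (w i * w j) := by
                rw [← Real.sqrt_mul (hw j).le, mul_comm]
              have h2 : Real.sqrt (w i * w j) * (Real.sqrt (w j) * Real.sqrt (w i))
                  = w i * w j := by
                rw [h1, Real.mul_self_sqrt (mul_nonneg (hw i).le (hw j).le)]
              rw [← mul_div_assoc, h2]
          · simp [hx, hj]
        · simp [hx, hi]
      have : Matrix.trace (W * X) = (∑ i, (if i ∈ S then w i else 0)) *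
          (∑ j, (if j ∈ S then w j else 0)) / s := by
        simp only [Matrix.trace, Matrix.diag, Matrix.mul_apply, hXdef, Matrix.of_apply]
        rw [Finset.sum_mul, Finset.sum_div]
        refine Finset.sum_congr rfl fun i _ => ?_
        rw [Finset.mul_sum, Finset.sum_div]
        refine Finset.sum_congr rfl fun j _ => ?_
        rw [key i j]
      rw [this, hsum_ite, mul_div_assoc, div_self hspos.ne', mul_one]
  -- conclude
  refine csSup_le ⟨0, ∅, by simp, by simp⟩ ?_
  rintro v ⟨S, hS, rfl⟩
  rcases S.eq_empty_or_nonempty with rfl | hSne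
  · simp only [Finset.sum_empty]
    have i0 : V := Classical.arbitrary V
    have hstab : ∀ i ∈ ({i0} : Finset V), ∀ j ∈ ({i0} : Finset V), ¬ G.Adj i j := by
      intro i hi j hj
      rw [Finset.mem_singleton] at hi hj
      rw [hi, hj]; exact G.loopless.irrefl i0
    have h0 : (∑ i ∈ ({i0} : Finset V), w i) ∈ R :=
      hmem {i0} ⟨i0, Finset.mem_singleton_self i0⟩ hstab
    rw [Finset.sum_singleton] at h0
    exact le_trans (hw i0).le (le_csSup hBdd h0)
  · exact le_csSup hBdd (hmem S hSne hS)
end
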